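/- Let K ⊆ S^n_+ be a closed convex cone, let F_K be a face of K, let G be a convex cone with G ⊆ F_K, let H ∈ S^n, and let B^1, …, B^m ∈ S^n satisfy: (C2) for every k, J_0(B^k) ⊆ K and F_K ∩ J_0(B^k) ⊆ G; (C3) for all distinct k, l, F_K ∩ J_0(B^k) ⊆ J_+(B^l). Suppose X̄ ∈ G satisfies ⟨B^k, X̄⟩ ≥ 0 for all k ∈ {1,…,m}, ⟨H, X̄⟩ = 1, and ⟨B^p, X̄⟩ = 0 for some p ∈ {1,…,m}. Then there exists z ∈ ℝ^n such that z·zᵀ ∈ G, ⟨B^k, z·zᵀ⟩ ≥ 0 for all k ∈ {1,…,m}, and ⟨H, z·zᵀ⟩ = 1. -/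

import Mathlib

open Matrix

noncomputable section

section SZHelpers
variable {n : ℕ}

private lemma vv_psd (z : Fin n → ℝ) : (vecMulVec z z).PosSemidef := by
  rw [posSemidef_iff_dotProduct_mulVec]
  constructor
  · ext i j
    simp [vecMulVec_apply, Matrix.conjTranspose_apply, mul_comm]
  · intro x
    have h : x ⬝ᵥ (vecMulVec z z) *ᵥ x = (z ⬝ᵥ x) * (z ⬝ᵥ x) := by
      simp [dotProduct, mulVec, vecMulVec_apply, Finset.mul_sum, Finset.sum_mul, mul_assoc, mul_comm, mul_left_comm]
    simp only [star_trivial] at *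
    rw [h]
    exact mul_self_nonneg _

private lemma tr_mul_add (A X Y : Matrix (Fin n) (Fin n) ℝ) :
    (A * (X + Y)).trace = (A * X).trace + (A * Y).trace := by
  rw [Matrix.mul_add, Matrix.trace_add]

private lemma tr_mul_smul (A : Matrix (Fin n) (Fin n) ℝ) (c : ℝ) (X : Matrix (Fin n) (Fin n) ℝ) :
    (A * (c • X)).trace = c * (A * X).trace := by
  rw [Matrix.mul_smul, Matrix.trace_smul, smul_eq_mul]

private lemma tr_mul_sum {ι : Type*} (A : Matrix (Fin n) (Fin n) ℝ) (s : Finset ι)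
    (X : ι → Matrix (Fin n) (Fin n) ℝ) :
    (A * ∑ i ∈ s, X i).trace = ∑ i ∈ s, (A * X i).trace := by
  rw [Matrix.mul_sum, Matrix.trace_sum]

private lemma vv_smul (a : ℝ) (u : Fin n → ℝ) :
    vecMulVec (a • u) (a • u) = (a ^ 2) • vecMulVec u u := by
  ext i j
  simp [vecMulVec_apply]
  ring

private lemma vv_expand (u v : Fin n → ℝ) (t : ℝ) :
    vecMulVec (u + t • v) (u + t • v) =
      vecMulVec u u + t • (vecMulVec u v + vecMulVec v u) + (t ^ 2) • vecMulVec v v := by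
  ext i j
  simp [vecMulVec_apply]
  ring

private lemma vv_pair (u v : Fin n → ℝ) (t : ℝ) (c : ℝ) (hc : c ^ 2 * (1 + t ^ 2) = 1) :
    vecMulVec (c • (u + t • v)) (c • (u + t • v)) +
      vecMulVec (c • (t • u - v)) (c • (t • u - v)) =
    vecMulVec u u + vecMulVec v v := by
  ext i j
  simp [vecMulVec_apply]
  linear_combination (u i * u j + v i * v j) * hc

private lemma exists_neg {r : ℕ} (f : Fin r → ℝ) (h0 : ∑ i, f i = 0)
    (i₀ : Fin r) (h : 0 < f i₀) : ∃ j, f j < 0 := by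
  by_contra hc
  push_neg at hc
  have hpos : (0:ℝ) < ∑ i, f i :=
    Finset.sum_pos' (fun i _ => hc i) ⟨i₀, Finset.mem_univ _, h⟩
  linarith [h0]

private lemma exists_pos_neg {r : ℕ} (f : Fin r → ℝ) (h0 : ∑ i, f i = 0)
    (i₀ : Fin r) (hi₀ : f i₀ ≠ 0) : ∃ i j, 0 < f i ∧ f j < 0 := by
  rcases lt_or_gt_of_ne hi₀ with h | h
  · obtain ⟨j, hj⟩ := exists_neg (fun i => -f i) (by simp [h0]) i₀ (by simpa using h.le.lt_of_ne (by simpa using hi₀))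
    exact ⟨j, i₀, by linarith [hj], h⟩
  · obtain ⟨j, hj⟩ := exists_neg f h0 i₀ h
    exact ⟨i₀, j, h, hj⟩

private lemma sturm_zhang (Bm : Matrix (Fin n) (Fin n) ℝ) :
    ∀ (N r : ℕ) (y : Fin r → Fin n → ℝ),
    (Finset.univ.filter fun i => (Bm * vecMulVec (y i) (y i)).trace ≠ 0).card ≤ N →
    (∑ i, (Bm * vecMulVec (y i) (y i)).trace) = 0 →
    ∃ w : Fin r → Fin n → ℝ,
      (∑ i, vecMulVec (w i) (w i)) = (∑ i, vecMulVec (y i) (y i)) ∧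
      ∀ i, (Bm * vecMulVec (w i) (w i)).trace = 0 := by
  intro N
  induction N with
  | zero =>
    intro r y hcard _
    refine ⟨y, rfl, fun i => ?_⟩
    by_contra hne
    have : i ∈ Finset.univ.filter fun i => (Bm * vecMulVec (y i) (y i)).trace ≠ 0 := by
      simp [hne]
    have := Finset.card_pos.mpr ⟨i, this⟩
    omega
  | succ N ih =>
    intro r y hcard hsum
    set f : Fin r → ℝ := fun i => (Bm * vecMulVec (y i) (y i)).trace with hf
    by_cases hall : ∀ i, f i = 0
    · exact ⟨y, rfl, hall⟩
    push_neg at hall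
    obtain ⟨i₀, hi₀⟩ := hall
    obtain ⟨i, j, hfi, hfj⟩ := exists_pos_neg f hsum i₀ hi₀
    have hij : i ≠ j := fun h => absurd (h ▸ hfi) (not_lt.mpr hfj.le)
    -- find root of the quadratic
    set a := f i with ha
    set b := f j with hb
    set c : ℝ := (Bm * vecMulVec (y i) (y j)).trace + (Bm * vecMulVec (y j) (y i)).trace with hcdef
    have hdisc : 0 ≤ c ^ 2 - 4 * a * b := by nlinarith
    set d := Real.sqrt (c ^ 2 - 4 * a * b) with hd
    have hd2 : d ^ 2 = c ^ 2 - 4 * a * b := Real.sq_sqrt hdisc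
    have hbne : b ≠ 0 := hfj.ne
    set t : ℝ := (-c - d) / (2 * b) with ht
    have hroot : a + t * c + t ^ 2 * b = 0 := by
      have h1 : t * (2 * b) = -c - d := by
        rw [ht]; field_simp
      have h2 : (2 * b) ^ 2 * (a + t * c + t ^ 2 * b) = 0 := by
        linear_combination (b * (t * (2 * b) + c - d)) * h1 + b * hd2
      have h3 : (2 * b) ^ 2 ≠ 0 := by positivity
      exact (mul_eq_zero.mp h2).resolve_left h3
    -- the rotation
    have hspos : (0:ℝ) < 1 + t ^ 2 := by positivity
    set c₀ : ℝ := (Real.sqrt (1 + t ^ 2))⁻¹ with hc₀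
    have hc₀2 : c₀ ^ 2 * (1 + t ^ 2) = 1 := by
      rw [hc₀, ← Real.sqrt_inv, Real.sq_sqrt (by positivity)]
      field_simp
    set u : Fin n → ℝ := c₀ • (y i + t • y j) with hu
    set v : Fin n → ℝ := c₀ • (t • y i - y j) with hv
    have hpair : vecMulVec u u + vecMulVec v v = vecMulVec (y i) (y i) + vecMulVec (y j) (y j) :=
      vv_pair (y i) (y j) t c₀ hc₀2
    have htru : (Bm * vecMulVec u u).trace = 0 := by
      rw [hu, vv_smul, vv_expand, tr_mul_smul]
      rw [tr_mul_add, tr_mul_add, tr_mul_smul, tr_mul_add, tr_mul_smul]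
      have : a + t * c + t ^ 2 * b = 0 := hroot
      rw [hf] at ha hb
      rw [ha, hb, hcdef] at this
      nlinarith [this]
    set w' : Fin r → Fin n → ℝ := Function.update (Function.update y i u) j v with hw'
    have hw'i : w' i = u := by
      rw [hw', Function.update_of_ne hij, Function.update_self]
    have hw'j : w' j = v := by
      rw [hw', Function.update_self]
    have hw'k : ∀ k, k ≠ i → k ≠ j → w' k = y k := by
      intro k hki hkj
      rw [hw', Function.update_of_ne hkj, Function.update_of_ne hki]
    -- sum preservation
    have hsum_split : ∀ (z : Fin r → Matrix (Fin n) (Fin n) ℝ),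
        ∑ k, z k = z i + (z j + ∑ k ∈ (Finset.univ.erase i).erase j, z k) := by
      intro z
      rw [Finset.add_sum_erase _ _ (Finset.mem_erase.mpr ⟨hij.symm, Finset.mem_univ j⟩),
        Finset.add_sum_erase _ _ (Finset.mem_univ i)]
    have htail : ∀ k ∈ (Finset.univ.erase i).erase j,
        vecMulVec (w' k) (w' k) = vecMulVec (y k) (y k) := by
      intro k hk
      rw [hw'k k (Finset.mem_erase.mp (Finset.mem_erase.mp hk).2).1 (Finset.mem_erase.mp hk).1]
    have hpres : ∑ k, vecMulVec (w' k) (w' k) = ∑ k, vecMulVec (y k) (y k) := by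
      rw [hsum_split (fun k => vecMulVec (w' k) (w' k)),
        hsum_split (fun k => vecMulVec (y k) (y k))]
      simp only [hw'i, hw'j]
      rw [Finset.sum_congr rfl htail]
      rw [← add_assoc, ← add_assoc, hpair]
    -- filter cardinality decrease
    have hsub : (Finset.univ.filter fun k => (Bm * vecMulVec (w' k) (w' k)).trace ≠ 0) ⊆
        (Finset.univ.filter fun k => (Bm * vecMulVec (y k) (y k)).trace ≠ 0).erase i := by
      intro k hk
      simp only [Finset.mem_filter, Finset.mem_univ, true_and] at hk
      have hki : k ≠ i := by
        intro h
        rw [h, hw'i] at hk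
        exact hk htru
      refine Finset.mem_erase.mpr ⟨hki, ?_⟩
      simp only [Finset.mem_filter, Finset.mem_univ, true_and]
      by_cases hkj : k = j
      · rw [hkj]; exact hfj.ne
      · rw [hw'k k hki hkj] at hk; exact hk
    have hicard : i ∈ Finset.univ.filter fun k => (Bm * vecMulVec (y k) (y k)).trace ≠ 0 := by
      simp only [Finset.mem_filter, Finset.mem_univ, true_and]
      exact hfi.ne'
    have hcard' : (Finset.univ.filter fun k => (Bm * vecMulVec (w' k) (w' k)).trace ≠ 0).card ≤ N := by
      have h1 := Finset.card_le_card hsub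
      rw [Finset.card_erase_of_mem hicard] at h1
      have h2 := Finset.card_pos.mpr ⟨i, hicard⟩
      omega
    have hsum' : (∑ k, (Bm * vecMulVec (w' k) (w' k)).trace) = 0 := by
      rw [← tr_mul_sum, hpres, tr_mul_sum]
      exact hsum
    obtain ⟨w, hweq, hw0⟩ := ih r w' hcard' hsum'
    exact ⟨w, hweq.trans hpres, hw0⟩

private lemma sum_mem_cone {K : Set (Matrix (Fin n) (Fin n) ℝ)}
    (h0 : (0 : Matrix (Fin n) (Fin n) ℝ) ∈ K)
    (hadd : ∀ X ∈ K, ∀ Y ∈ K, X + Y ∈ K) :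
    ∀ (r : ℕ) (X : Fin r → Matrix (Fin n) (Fin n) ℝ), (∀ i, X i ∈ K) →
      (∑ i, X i) ∈ K := by
  intro r
  induction r with
  | zero => intro X _; simpa using h0
  | succ r ih =>
    intro X hX
    rw [Fin.sum_univ_succ]
    exact hadd _ (hX 0) _ (ih (fun i => X i.succ) (fun i => hX i.succ))

private lemma face_split {K FK : Set (Matrix (Fin n) (Fin n) ℝ)}
    (h0 : (0 : Matrix (Fin n) (Fin n) ℝ) ∈ K)
    (hadd : ∀ X ∈ K, ∀ Y ∈ K, X + Y ∈ K)
    (hFKface : ∀ X ∈ K, ∀ Y ∈ K, X + Y ∈ FK → X ∈ FK ∧ Y ∈ FK) :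
    ∀ (r : ℕ) (X : Fin r → Matrix (Fin n) (Fin n) ℝ), (∀ i, X i ∈ K) →
      (∑ i, X i) ∈ FK → ∀ i, X i ∈ FK := by
  intro r
  induction r with
  | zero => intro X _ _ i; exact absurd i.2 (by omega)
  | succ r ih =>
    intro X hX hsum i
    rw [Fin.sum_univ_succ] at hsum
    have htail := sum_mem_cone h0 hadd r (fun k => X k.succ) (fun k => hX k.succ)
    obtain ⟨h1, h2⟩ := hFKface _ (hX 0) _ htail hsum
    rcases Fin.eq_zero_or_eq_succ i with h | ⟨k, hk⟩
    · rwa [h]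
    · rw [hk]
      exact ih (fun k => X k.succ) (fun k => hX k.succ) h2 k

end SZHelpers

/-- case (i) in the proof of the main theorem. -/
theorem stmt_16 (n m : ℕ) (K FK G : Set (Matrix (Fin n) (Fin n) ℝ))
    (hKpsd : ∀ X ∈ K, X.PosSemidef) (hKclosed : IsClosed K) (hKconv : Convex ℝ K)
    (hKcone : ∀ (c : ℝ), 0 ≤ c → ∀ X ∈ K, c • X ∈ K)
    -- FK is a face of K
    (hFKsub : FK ⊆ K) (hFKconv : Convex ℝ FK)
    (hFKcone : ∀ (c : ℝ), 0 ≤ c → ∀ X ∈ FK, c • X ∈ FK)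
    (hFKface : ∀ X ∈ K, ∀ Y ∈ K, X + Y ∈ FK → X ∈ FK ∧ Y ∈ FK)
    -- G is a convex cone with G ⊆ FK
    (hGconv : Convex ℝ G) (hGcone : ∀ (c : ℝ), 0 ≤ c → ∀ X ∈ G, c • X ∈ G)
    (hGFK : G ⊆ FK)
    (H : Matrix (Fin n) (Fin n) ℝ) (hHsym : H.IsSymm)
    (B : Fin m → Matrix (Fin n) (Fin n) ℝ) (hBsym : ∀ k, (B k).IsSymm)
    -- (C2)
    (hC2 : ∀ k, {X : Matrix (Fin n) (Fin n) ℝ | X.PosSemidef ∧ (B k * X).trace = 0} ⊆ K ∧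
      FK ∩ {X | X.PosSemidef ∧ (B k * X).trace = 0} ⊆ G)
    -- (C3)
    (hC3 : ∀ k l, k ≠ l →
      FK ∩ {X : Matrix (Fin n) (Fin n) ℝ | X.PosSemidef ∧ (B k * X).trace = 0} ⊆
      {X | X.PosSemidef ∧ 0 ≤ (B l * X).trace})
    (Xb : Matrix (Fin n) (Fin n) ℝ) (hXbG : Xb ∈ G)
    (hXbB : ∀ k, 0 ≤ (B k * Xb).trace) (hXbH : (H * Xb).trace = 1)
    (p : Fin m) (hp : (B p * Xb).trace = 0) :
    ∃ z : Fin n → ℝ, vecMulVec z z ∈ G ∧ (∀ k, 0 ≤ (B k * vecMulVec z z).trace) ∧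
      (H * vecMulVec z z).trace = 1 := by
  classical
  have hXbFK : Xb ∈ FK := hGFK hXbG
  have hXbK : Xb ∈ K := hFKsub hXbFK
  have hXbpsd := hKpsd _ hXbK
  obtain ⟨A, hA⟩ : ∃ A : Matrix (Fin n) (Fin n) ℝ, Xb = Aᴴ * A := by
    open scoped MatrixOrder Matrix.Norms.L2Operator in
    exact CStarAlgebra.nonneg_iff_eq_star_mul_self.mp hXbpsd.nonneg
  have hdecomp : Xb = ∑ i : Fin n, vecMulVec (A i) (A i) := by
    rw [hA]
    ext a b
    simp [Matrix.mul_apply, Matrix.conjTranspose_apply, vecMulVec_apply, Matrix.sum_apply]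
  have hsum0 : (∑ i, ((B p) * vecMulVec (A i) (A i)).trace) = 0 := by
    rw [← tr_mul_sum, ← hdecomp]; exact hp
  obtain ⟨w, hwsum, hw0⟩ := sturm_zhang (B p) _ n (fun i => A i) le_rfl hsum0
  have hwXb : ∑ i, vecMulVec (w i) (w i) = Xb := by rw [hwsum, ← hdecomp]
  have hK0 : (0 : Matrix (Fin n) (Fin n) ℝ) ∈ K := by
    have := hKcone 0 le_rfl Xb hXbK
    simpa using this
  have hKadd : ∀ X ∈ K, ∀ Y ∈ K, X + Y ∈ K := by
    intro X hX Y hY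
    have hm : (1/2:ℝ) • X + (1/2:ℝ) • Y ∈ K :=
      hKconv hX hY (by norm_num) (by norm_num) (by norm_num)
    have h2 := hKcone 2 (by norm_num) _ hm
    have : (2:ℝ) • ((1/2:ℝ) • X + (1/2:ℝ) • Y) = X + Y := by
      rw [smul_add, smul_smul, smul_smul]
      norm_num
    rwa [this] at h2
  have hmemK : ∀ i, vecMulVec (w i) (w i) ∈ K := fun i =>
    (hC2 p).1 ⟨vv_psd _, hw0 i⟩
  have hmemFK : ∀ i, vecMulVec (w i) (w i) ∈ FK :=
    face_split hK0 hKadd hFKface n _ hmemK (by rw [hwXb]; exact hXbFK)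
  have hmemG : ∀ i, vecMulVec (w i) (w i) ∈ G := fun i =>
    (hC2 p).2 ⟨hmemFK i, vv_psd _, hw0 i⟩
  have hBnn : ∀ i k, 0 ≤ (B k * vecMulVec (w i) (w i)).trace := by
    intro i k
    by_cases hkp : k = p
    · rw [hkp, hw0 i]
    · exact (hC3 p k (fun h => hkp h.symm) ⟨hmemFK i, vv_psd _, hw0 i⟩).2
  have hHsum : (∑ i, (H * vecMulVec (w i) (w i)).trace) = 1 := by
    rw [← tr_mul_sum, hwXb]; exact hXbH
  have hex : ∃ i, 0 < (H * vecMulVec (w i) (w i)).trace := by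
    by_contra hc
    push_neg at hc
    have h0 : (∑ i, (H * vecMulVec (w i) (w i)).trace) ≤ 0 :=
      Finset.sum_nonpos (fun i _ => hc i)
    linarith [hHsum]
  obtain ⟨i, hi⟩ := hex
  set cH := (H * vecMulVec (w i) (w i)).trace with hcH
  have hscale : vecMulVec ((Real.sqrt cH)⁻¹ • w i) ((Real.sqrt cH)⁻¹ • w i) =
      cH⁻¹ • vecMulVec (w i) (w i) := by
    rw [vv_smul, inv_pow, Real.sq_sqrt hi.le]
  refine ⟨(Real.sqrt cH)⁻¹ • w i, ?_, ?_, ?_⟩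
  · rw [hscale]
    exact hGcone cH⁻¹ (inv_nonneg.mpr hi.le) _ (hmemG i)
  · intro k
    rw [hscale, tr_mul_smul]
    exact mul_nonneg (inv_nonneg.mpr hi.le) (hBnn i k)
  · rw [hscale, tr_mul_smul, ← hcH, inv_mul_cancel₀ hi.ne']
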